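/- Let (X_n, Y_n) ∈ ℝ₊² and define the explicit two-stage scheme y₁ = Y_n · exp((h/2)(X_n - 3/2)) · exp(J/2), X_{n+1} = X_n · exp(-h·y₁ + h), Y_{n+1} = Y_n · exp((h/2)(X_{n+1} + X_n - 3)) · exp(J), for fixed h > 0, J ∈ ℝ. Viewing (X_{n+1}, Y_{n+1}) as a smooth function of (X_n, Y_n) on ℝ₊², the Jacobian M satisfies Mᵀ K(X_{n+1},Y_{n+1}) M = K(X_n,Y_n), where K(x,y) = [[0, -1/(xy)], [1/(xy), 0]]. Equivalently, det M = (X_{n+1} Y_{n+1})/(X_n Y_n). -/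

import Mathlib

open Matrix

/-- The Jacobian matrix of a map `f : ℝⁿ → ℝᵐ` at a point `z`. -/
noncomputable def jacobianMatrix {n m : ℕ} (f : (Fin n → ℝ) → (Fin m → ℝ))
    (z : Fin n → ℝ) : Matrix (Fin m) (Fin n) ℝ :=
  Matrix.of fun i j => fderiv ℝ f z (Pi.single j 1) i

/-- First stage of the explicit two-stage K-partitioned Runge--Kutta scheme. -/
noncomputable def lvStage (h J : ℝ) (z : Fin 2 → ℝ) : ℝ :=
  z 1 * Real.exp (h / 2 * (z 0 - 3 / 2)) * Real.exp (J / 2)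

/-- The one-step map of the explicit scheme (Scheme 4 of the paper). -/
noncomputable def lvStep (h J : ℝ) (z : Fin 2 → ℝ) : Fin 2 → ℝ :=
  ![z 0 * Real.exp (-(h * lvStage h J z) + h),
    z 1 * Real.exp (h / 2 * (z 0 * Real.exp (-(h * lvStage h J z) + h) + z 0 - 3))
      * Real.exp J]

/-- The Lotka--Volterra structure matrix `K(x,y) = [[0,-1/(xy)],[1/(xy),0]]`. -/
noncomputable def lvK (w : Fin 2 → ℝ) : Matrix (Fin 2) (Fin 2) ℝ :=
  !![0, -(1 / (w 0 * w 1)); 1 / (w 0 * w 1), 0]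

/-- A linear form on `ℝ²` given by its two coefficients. -/
noncomputable def lm2 (a b : ℝ) : (Fin 2 → ℝ) →L[ℝ] ℝ :=
  a • ContinuousLinearMap.proj 0 + b • ContinuousLinearMap.proj 1

@[simp] lemma lm2_apply (a b : ℝ) (v : Fin 2 → ℝ) : lm2 a b v = a * v 0 + b * v 1 := by
  simp [lm2]

lemma aux2 (M : Matrix (Fin 2) (Fin 2) ℝ) (c : ℝ) :
    Mᵀ * !![0, -c; c, 0] * M = M.det • !![0, -c; c, 0] := by
  ext i j
  fin_cases i <;> fin_cases j <;>
    simp [Matrix.mul_apply, Fin.sum_univ_two, Matrix.det_fin_two] <;> ring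

/-- The explicit stochastic K-partitioned Runge--Kutta scheme (Scheme 4) is
K-symplectic: its Jacobian `M` satisfies `Mᵀ K(Xₙ₊₁,Yₙ₊₁) M = K(Xₙ,Yₙ)`, equivalently
`det M = (Xₙ₊₁Yₙ₊₁)/(XₙYₙ)`. -/
theorem stmt_17 (h J : ℝ) (hh : 0 < h) :
    ∀ z : Fin 2 → ℝ, 0 < z 0 → 0 < z 1 →
      (jacobianMatrix (lvStep h J) z)ᵀ * lvK (lvStep h J z) * jacobianMatrix (lvStep h J) z
        = lvK z ∧
      (jacobianMatrix (lvStep h J) z).det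
        = (lvStep h J z 0 * lvStep h J z 1) / (z 0 * z 1) := by
  intro z hx hy
  set x := z 0
  set y := z 1
  set A := Real.exp (h / 2 * (z 0 - 3 / 2)) with hA
  set B := Real.exp (J / 2) with hB
  set E := Real.exp (-(h * lvStage h J z) + h) with hE
  set G := Real.exp (h / 2 * (z 0 * Real.exp (-(h * lvStage h J z) + h) + z 0 - 3)) with hG
  set C := Real.exp J with hC
  have hS : HasFDerivAt (lvStage h J) (lm2 (lvStage h J z * (h / 2)) (A * B)) z := by
    have h1 := (((hasFDerivAt_apply 1 z).mul
        ((((hasFDerivAt_apply 0 z).sub_const (3/2 : ℝ)).const_mul (h/2)).exp)).mul_const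
        (Real.exp (J/2)))
    exact h1.congr_fderiv (by ext v; simp [lvStage, ← hA, ← hB]; ring)
  have hf0 : HasFDerivAt (fun w => w 0 * Real.exp (-(h * lvStage h J w) + h))
      (lm2 (E - x * E * h * (lvStage h J z * (h/2))) (-(x * E * h * (A * B)))) z := by
    have h1 := (hasFDerivAt_apply 0 z).mul (((hS.const_mul h).neg.add_const h).exp)
    exact h1.congr_fderiv (by ext v; simp [← hE]; ring)
  have hf1 : HasFDerivAt (fun w => w 1 *
        Real.exp (h / 2 * (w 0 * Real.exp (-(h * lvStage h J w) + h) + w 0 - 3)) * Real.exp J)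
      (lm2 (y * G * C * (h/2) * ((E - x * E * h * (lvStage h J z * (h/2))) + 1))
           (G * C + y * G * C * (h/2) * (-(x * E * h * (A * B))))) z := by
    have h1 := (((hasFDerivAt_apply 1 z).mul
        ((((hf0.add (hasFDerivAt_apply 0 z)).sub_const (3:ℝ)).const_mul (h/2)).exp)).mul_const
        (Real.exp J))
    exact h1.congr_fderiv (by ext v; simp [← hG, ← hC]; ring)
  have hStep : HasFDerivAt (lvStep h J)
      (ContinuousLinearMap.pi
        ![lm2 (E - x * E * h * (lvStage h J z * (h/2))) (-(x * E * h * (A * B))),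
          lm2 (y * G * C * (h/2) * ((E - x * E * h * (lvStage h J z * (h/2))) + 1))
              (G * C + y * G * C * (h/2) * (-(x * E * h * (A * B))))]) z := by
    refine hasFDerivAt_pi'.2 fun i => ?_
    fin_cases i
    · simpa [lvStep, ContinuousLinearMap.proj_pi] using hf0
    · simpa [lvStep, ContinuousLinearMap.proj_pi] using hf1
  have hM : jacobianMatrix (lvStep h J) z =
      !![E - x * E * h * (lvStage h J z * (h/2)), -(x * E * h * (A * B));
         y * G * C * (h/2) * ((E - x * E * h * (lvStage h J z * (h/2))) + 1),
         G * C + y * G * C * (h/2) * (-(x * E * h * (A * B)))] := by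
    have hf := hStep.fderiv
    ext i j
    fin_cases i <;> fin_cases j <;>
      simp [jacobianMatrix, hf, ContinuousLinearMap.pi_apply]
  have hx0 : x ≠ 0 := ne_of_gt hx
  have hy0 : y ≠ 0 := ne_of_gt hy
  have hstep0 : lvStep h J z 0 = x * E := by simp [lvStep, ← hE]; exact Or.inl rfl
  have hstep1 : lvStep h J z 1 = y * G * C := by simp [lvStep, ← hG, ← hC]; exact Or.inl (Or.inl rfl)
  have hSval : lvStage h J z = y * A * B := rfl
  have hE0 : E ≠ 0 := by rw [hE]; exact Real.exp_ne_zero _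
  have hG0 : G ≠ 0 := by rw [hG]; exact Real.exp_ne_zero _
  have hC0 : C ≠ 0 := by rw [hC]; exact Real.exp_ne_zero _
  have hdet : (jacobianMatrix (lvStep h J) z).det
      = (lvStep h J z 0 * lvStep h J z 1) / (z 0 * z 1) := by
    rw [hM, Matrix.det_fin_two_of, hstep0, hstep1, hSval]
    field_simp
    simp only [x, y] at hx0 hy0 ⊢
    field_simp
    ring
  refine ⟨?_, hdet⟩
  have hKeq : lvK (lvStep h J z)
      = !![0, -(1 / (lvStep h J z 0 * lvStep h J z 1)); 1 / (lvStep h J z 0 * lvStep h J z 1), 0] := rfl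
  rw [hKeq, aux2, hdet]
  have hne : lvStep h J z 0 * lvStep h J z 1 ≠ 0 := by
    rw [hstep0, hstep1]
    exact mul_ne_zero (mul_ne_zero hx0 hE0) (mul_ne_zero (mul_ne_zero hy0 hG0) hC0)
  have ha : lvStep h J z 0 ≠ 0 := by
    rw [hstep0]; exact mul_ne_zero hx0 hE0
  have hb : lvStep h J z 1 ≠ 0 := by
    rw [hstep1]; exact mul_ne_zero (mul_ne_zero hy0 hG0) hC0
  ext i j
  fin_cases i <;> fin_cases j <;> simp [lvK] <;>
    · field_simp
      try ring
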